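/- Let k, r be positive integers and 0 < u < v. For the function g(x) = (-1)^{k+r-1}/((k+r-1)! · x), writing M(u,v) = (g(v)-g(u))/(v-u) and _iM_j = ∂^{i+j}M/∂u^i∂v^j, one has C(k+r-2, k-1) · _{r-1}M_{k-1}(u,v) = 1/((k+r-1) · u^r · v^k). -/

import Mathlib

open Filter Set Topology

private lemma iter_deriv_const_mul_fn (a : ℝ) (f : ℝ → ℝ) (n : ℕ) :
    deriv^[n] (fun y => a * f y) = fun y => a * deriv^[n] f y := by
  induction n with
  | zero => rfl
  | succ n ih =>
      rw [Function.iterate_succ_apply', ih, Function.iterate_succ_apply']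
      exact deriv_const_mul_field' a

private lemma prod_neg_one_sub (n : ℕ) :
    (∏ i ∈ Finset.range n, (-1 - (i : ℝ))) = (-1) ^ n * n.factorial := by
  induction n with
  | zero => simp
  | succ n ih =>
      rw [Finset.prod_range_succ, ih, Nat.factorial_succ]
      push_cast
      ring

private lemma iter_deriv_a_inv (a : ℝ) (n : ℕ) (x : ℝ) :
    iteratedDeriv n (fun y => a * y⁻¹) x
      = a * ((-1) ^ n * n.factorial * x ^ (-1 - (n : ℤ))) := by
  rw [iteratedDeriv_eq_iterate, iter_deriv_const_mul_fn]
  have := iter_deriv_inv (𝕜 := ℝ) n x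
  simp only [Function.iterate_succ_apply'] at this ⊢
  rw [show (deriv^[n] fun y : ℝ => y⁻¹) = deriv^[n] Inv.inv from rfl, this]

/-- Mixed partial derivative `∂^{i+j} M / ∂u^i ∂v^j` of `M(u,v) = (g v - g u)/(v-u)`. -/
noncomputable def Mmix (g : ℝ → ℝ) (i j : ℕ) (u v : ℝ) : ℝ :=
  iteratedDeriv i (fun u' => iteratedDeriv j (fun v' => (g v' - g u') / (v' - u')) v) u

/-- for `g(x) = (-1)^{k+r-1}/((k+r-1)!·x)` and `0 < u < v`,
`C(k+r-2, k-1) · _{r-1}M_{k-1}(u,v) = 1/((k+r-1)·u^r·v^k)`. -/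
theorem stmt13 (k r : ℕ) (hk : 1 ≤ k) (hr : 1 ≤ r) (u v : ℝ)
    (hu : 0 < u) (huv : u < v) :
    ((k + r - 2).choose (k - 1) : ℝ) *
        Mmix (fun x => (-1 : ℝ) ^ (k + r - 1) / (((k + r - 1).factorial : ℝ) * x))
          (r - 1) (k - 1) u v =
      1 / (((k : ℝ) + r - 1) * u ^ r * v ^ k) := by
  obtain ⟨k', rfl⟩ : ∃ k', k = k' + 1 := ⟨k - 1, by omega⟩
  obtain ⟨r', rfl⟩ : ∃ r', r = r' + 1 := ⟨r - 1, by omega⟩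
  have hkr1 : k' + 1 + (r' + 1) - 1 = k' + r' + 1 := by omega
  have hkr2 : k' + 1 + (r' + 1) - 2 = k' + r' := by omega
  simp only [hkr1, hkr2, Nat.add_sub_cancel]
  set N : ℝ := ((k' + r' + 1).factorial : ℝ) with hN
  have hN0 : N ≠ 0 := Nat.cast_ne_zero.2 (Nat.factorial_ne_zero _)
  set A : ℝ := (-1 : ℝ) ^ (k' + r' + 1) with hA
  set c : ℝ := A / N with hc
  have hv : (0:ℝ) < v := hu.trans huv
  unfold Mmix
  have hstep1 : ∀ u' ∈ Ioo (u/2) ((u+v)/2),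
      iteratedDeriv k' (fun v' => (A / (N * v') - A / (N * u')) / (v' - u')) v
        = (-c * ((-1) ^ k' * (k'.factorial : ℝ) * v ^ (-1 - (k' : ℤ)))) * u'⁻¹ := by
    intro u' hu'
    obtain ⟨h1, h2⟩ := hu'
    have hu'0 : u' ≠ 0 := ne_of_gt (by linarith)
    have heq : (fun v' => (A / (N * v') - A / (N * u')) / (v' - u'))
        =ᶠ[𝓝 v] (fun v' => (-c * u'⁻¹) * v'⁻¹) := by
      filter_upwards [Ioo_mem_nhds (show (u+v)/2 < v by linarith) (lt_add_one v)]
        with v' hv'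
      obtain ⟨g1, g2⟩ := hv'
      have hv'0 : v' ≠ 0 := ne_of_gt (by linarith)
      have hne : v' - u' ≠ 0 := sub_ne_zero.2 (ne_of_gt (by linarith))
      rw [hc]
      field_simp
      ring
    rw [heq.iteratedDeriv_eq, iter_deriv_a_inv]
    ring
  have houter : (fun u' => iteratedDeriv k'
        (fun v' => (A / (N * v') - A / (N * u')) / (v' - u')) v)
      =ᶠ[𝓝 u] fun u' =>
        (-c * ((-1) ^ k' * (k'.factorial : ℝ) * v ^ (-1 - (k' : ℤ)))) * u'⁻¹ := by
    filter_upwards [Ioo_mem_nhds (show u/2 < u by linarith) (show u < (u+v)/2 by linarith)]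
      with u' hu' using hstep1 u' hu'
  rw [houter.iteratedDeriv_eq, iter_deriv_a_inv]
  have hzk : v ^ (-1 - (k' : ℤ)) = (v ^ (k' + 1))⁻¹ := by
    rw [show (-1 - (k' : ℤ)) = -((k' + 1 : ℕ) : ℤ) by push_cast; ring, zpow_neg, zpow_natCast]
  have hzr : u ^ (-1 - (r' : ℤ)) = (u ^ (r' + 1))⁻¹ := by
    rw [show (-1 - (r' : ℤ)) = -((r' + 1 : ℕ) : ℤ) by push_cast; ring, zpow_neg, zpow_natCast]
  rw [hzk, hzr, hc, hA]
  have hsign : ((-1 : ℝ)) ^ (k' + r' + 1) * ((-1) ^ k' * (-1) ^ r') = -1 := by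
    rw [← pow_add, ← pow_add, show k' + r' + 1 + (k' + r') = 2 * (k' + r') + 1 by ring,
      pow_succ, pow_mul, neg_one_sq, one_pow, one_mul]
  have hfac : ((k' + r').choose k' : ℝ) * k'.factorial * r'.factorial
      = (k' + r').factorial := by
    have := Nat.choose_mul_factorial_mul_factorial (Nat.le_add_right k' r')
    rw [Nat.add_sub_cancel_left] at this
    exact_mod_cast congrArg (Nat.cast : ℕ → ℝ) this
  have hNfac : N = ((k' + r' : ℕ) + 1 : ℝ) * ((k' + r').factorial : ℝ) := by
    rw [hN, Nat.factorial_succ]; push_cast; ring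
  have hu0 : u ≠ 0 := ne_of_gt hu
  have hv0 : v ≠ 0 := ne_of_gt hv
  have hLHS : (((k' + r').choose k' : ℝ)) *
      (-((-1:ℝ)^(k'+r'+1)/N) * ((-1:ℝ)^k' * (k'.factorial:ℝ) * (v^(k'+1))⁻¹) *
        ((-1:ℝ)^r' * (r'.factorial:ℝ) * (u^(r'+1))⁻¹))
      = (-((-1:ℝ)^(k'+r'+1) * ((-1:ℝ)^k' * (-1:ℝ)^r'))) *
        ((((k' + r').choose k' : ℝ) * k'.factorial * r'.factorial) /
          (N * v^(k'+1) * u^(r'+1))) := by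
    field_simp
  have hD2a : ((k'+1:ℕ):ℝ) + ((r'+1:ℕ):ℝ) - 1 ≠ 0 := by
    have : ((k'+1:ℕ):ℝ) + ((r'+1:ℕ):ℝ) - 1 = (k':ℝ) + r' + 1 := by push_cast; ring
    rw [this]; positivity
  have hD2 : (((k'+1:ℕ):ℝ) + ((r'+1:ℕ):ℝ) - 1) * u ^ (r'+1) * v ^ (k'+1) ≠ 0 :=
    mul_ne_zero (mul_ne_zero hD2a (pow_ne_zero _ hu0)) (pow_ne_zero _ hv0)
  have hfac0 : ((k' + r').factorial : ℝ) ≠ 0 := Nat.cast_ne_zero.2 (Nat.factorial_ne_zero _)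
  have hD1 : ((k' + r' : ℕ) : ℝ) + 1 ≠ 0 := by positivity
  rw [hLHS, hsign, hfac, hNfac, neg_neg, one_mul,
    div_eq_div_iff (by positivity) hD2]
  push_cast
  ring
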